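/- Let X be a Banach space, (X, D) a Plichko pair, and P : X → X a bounded projection with P*D ⊆ D. Then (ker P, D ∩ ker P*) is a Plichko pair; moreover if D is r-norming for X then the restriction of D ∩ ker P* to ker P is (r(1+‖P‖))-norming for ker P, and if A ⊆ X is linearly dense with countable supports witnessing the Plichko pair, then B = {a − Pa : a ∈ A} is linearly dense in ker P and suppt(y, B) = suppt(y, A) for every y ∈ D ∩ ker P*. -/
import Mathlib


/-- let `(X, D)` be a Plichko pair (witnessed by the linearly dense
set `A` with countable supports), with `D` an `r`-norming linear subspace, and let
`P` be a bounded projection with `P* D ⊆ D`.  Then `(ker P, D ∩ ker P*)` is a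
Plichko pair: `B = {a − Pa : a ∈ A}` is linearly dense in `ker P`, every
`y ∈ D ∩ ker P*` has `suppt(y, B) = suppt(y, A)` (via `y (a − Pa) = y a`) and in
particular countable `B`-support, and the restriction of `D ∩ ker P*` to `ker P`
is `r(1 + ‖P‖)`-norming for `ker P`. -/
theorem statement10 {X : Type*} [NormedAddCommGroup X] [NormedSpace ℝ X] [CompleteSpace X]
    (D : Submodule ℝ (X →L[ℝ] ℝ)) (r : ℝ) (hr : 1 ≤ r)
    (hnorming : ∀ x : X, ‖x‖ ≤ r * sSup {t : ℝ | ∃ φ ∈ D, φ ≠ 0 ∧ t = |φ x| / ‖φ‖})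
    (A : Set X) (hAdense : closure (Submodule.span ℝ A : Set X) = Set.univ)
    (hAsupp : ∀ y ∈ D, {a ∈ A | y a ≠ 0}.Countable)
    (P : X →L[ℝ] X) (hP : P.comp P = P)
    (hPD : ∀ φ ∈ D, φ.comp P ∈ D)
    (B : Set X) (hB : B = (fun a => a - P a) '' A) :
    closure (Submodule.span ℝ B : Set X) = {x : X | P x = 0} ∧
    (∀ y ∈ D, y.comp P = 0 → ∀ a : X, y (a - P a) = y a) ∧
    (∀ y ∈ D, y.comp P = 0 → {b ∈ B | y b ≠ 0}.Countable) ∧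
    (∀ x : X, P x = 0 → ‖x‖ ≤ r * (1 + ‖P‖) *
      sSup {t : ℝ | ∃ φ ∈ D, φ.comp P = 0 ∧ φ ≠ 0 ∧ t = |φ x| / ‖φ‖}) := by
  subst hB
  have hPproj : ∀ a : X, P (a - P a) = 0 := by
    intro a
    have h := ContinuousLinearMap.ext_iff.mp hP a
    rw [ContinuousLinearMap.comp_apply] at h
    simp [map_sub, h]
  have key2 : ∀ y ∈ D, y.comp P = 0 → ∀ a : X, y (a - P a) = y a := by
    intro y hy hyP a
    have : y (P a) = 0 := congrFun (congrArg (fun f : X →L[ℝ] ℝ => (f : X → ℝ)) hyP) a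
    simp [map_sub, this]
  refine ⟨?_, key2, ?_, ?_⟩
  · apply Set.Subset.antisymm
    · refine closure_minimal ?_ (isClosed_eq P.continuous continuous_const)
      intro x hx
      have : x ∈ LinearMap.ker (P : X →ₗ[ℝ] X) := by
        refine Submodule.span_le.mpr ?_ hx
        rintro _ ⟨a, -, rfl⟩
        exact hPproj a
      exact this
    · intro x hx
      have hxmem : x ∈ closure (Submodule.span ℝ A : Set X) := by
        rw [hAdense]; trivial
      set Q : X →L[ℝ] X := ContinuousLinearMap.id ℝ X - P with hQdef
      have hQapp : ∀ a : X, Q a = a - P a := fun a => rfl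
      have hmap : Set.MapsTo Q (Submodule.span ℝ A : Set X)
          (Submodule.span ℝ ((fun a => a - P a) '' A) : Set X) := by
        intro z hz
        have : Q z ∈ Submodule.map (Q : X →ₗ[ℝ] X) (Submodule.span ℝ A) :=
          Submodule.mem_map_of_mem hz
        rw [Submodule.map_span] at this
        have himg : (Q : X →ₗ[ℝ] X) '' A = (fun a => a - P a) '' A := by
          apply Set.image_congr
          intro a _
          exact hQapp a
        rwa [himg] at this
      have := map_mem_closure Q.continuous hxmem hmap
      have hQx : Q x = x := by rw [hQapp, hx, sub_zero]
      rwa [hQx] at this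
  · intro y hy hyP
    have hsub : {b ∈ (fun a => a - P a) '' A | y b ≠ 0} ⊆
        (fun a => a - P a) '' {a ∈ A | y a ≠ 0} := by
      rintro _ ⟨⟨a, ha, rfl⟩, hne⟩
      exact ⟨a, ⟨ha, by rwa [key2 y hy hyP a] at hne⟩, rfl⟩
    exact (((hAsupp y hy).image _).mono hsub)
  · intro x hx
    set S := {t : ℝ | ∃ φ ∈ D, φ.comp P = 0 ∧ φ ≠ 0 ∧ t = |φ x| / ‖φ‖} with hS
    have hSbdd : ∀ t ∈ S, t ≤ ‖x‖ := by
      rintro _ ⟨φ, -, -, hφne, rfl⟩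
      rw [div_le_iff₀ (norm_pos_iff.mpr hφne)]
      calc |φ x| = ‖φ x‖ := rfl
        _ ≤ ‖φ‖ * ‖x‖ := φ.le_opNorm x
        _ = ‖x‖ * ‖φ‖ := mul_comm _ _
    have hSnonneg : 0 ≤ sSup S := by
      rcases Set.eq_empty_or_nonempty S with h | ⟨t, ht⟩
      · rw [h, Real.sSup_empty]
      · have ht0 : 0 ≤ t := by
          obtain ⟨φ, -, -, -, rfl⟩ := ht
          positivity
        exact ht0.trans (le_csSup ⟨‖x‖, hSbdd⟩ ht)
    have hPos : (0:ℝ) < 1 + ‖P‖ := by positivity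
    have hstep : sSup {t : ℝ | ∃ φ ∈ D, φ ≠ 0 ∧ t = |φ x| / ‖φ‖} ≤ (1 + ‖P‖) * sSup S := by
      apply Real.sSup_le
      · rintro _ ⟨φ, hφ, hφne, rfl⟩
        by_cases hφx : φ x = 0
        · rw [hφx]; simp only [abs_zero, zero_div]
          positivity
        · set ψ : X →L[ℝ] ℝ := φ - φ.comp P with hψdef
          have hψx : ψ x = φ x := by
            simp [hψdef, ContinuousLinearMap.sub_apply, ContinuousLinearMap.comp_apply, hx]
          have hψP : ψ.comp P = 0 := by
            ext a
            have h := ContinuousLinearMap.ext_iff.mp hP a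
            rw [ContinuousLinearMap.comp_apply] at h
            simp [hψdef, ContinuousLinearMap.comp_apply, h]
          have hψD : ψ ∈ D := D.sub_mem hφ (hPD φ hφ)
          have hψne : ψ ≠ 0 := by
            intro h
            apply hφx
            rw [← hψx, h]; rfl
          have hψnorm : ‖ψ‖ ≤ ‖φ‖ * (1 + ‖P‖) := by
            calc ‖ψ‖ ≤ ‖φ‖ + ‖φ.comp P‖ := norm_sub_le _ _
              _ ≤ ‖φ‖ + ‖φ‖ * ‖P‖ := by gcongr; exact φ.opNorm_comp_le P
              _ = ‖φ‖ * (1 + ‖P‖) := by ring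
          have hmem : |ψ x| / ‖ψ‖ ∈ S := ⟨ψ, hψD, hψP, hψne, rfl⟩
          have hψpos : (0:ℝ) < ‖ψ‖ := norm_pos_iff.mpr hψne
          have h1 : |φ x| / ‖φ‖ ≤ (1 + ‖P‖) * (|ψ x| / ‖ψ‖) := by
            rw [hψx, ← mul_div_assoc]
            have e : |φ x| / ‖φ‖ = ((1 + ‖P‖) * |φ x|) / ((1 + ‖P‖) * ‖φ‖) := by
              rw [mul_div_mul_left _ _ (ne_of_gt hPos)]
            rw [e]
            exact div_le_div₀ (by positivity) le_rfl hψpos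
              (hψnorm.trans_eq (mul_comm _ _))
          exact h1.trans (by gcongr; exact le_csSup ⟨‖x‖, hSbdd⟩ hmem)
      · positivity
    calc ‖x‖ ≤ r * sSup {t : ℝ | ∃ φ ∈ D, φ ≠ 0 ∧ t = |φ x| / ‖φ‖} := hnorming x
      _ ≤ r * ((1 + ‖P‖) * sSup S) :=
          mul_le_mul_of_nonneg_left hstep (by linarith)
      _ = r * (1 + ‖P‖) * sSup S := by ring
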